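/- Let D = diag(λ₁,…,λₙ) be a diagonal n×n complex matrix with λ_k > 0 for all k and Σ_{k=1}^n λ_k = 1, let f₁, f₂ ∈ F_op satisfy f₁(0)/f₁(t) ≥ f₂(0)/f₂(t) for all t > 0, and let A⁽¹⁾,…,A⁽ᴺ⁾ be Hermitian n×n complex matrices. Then det(qCov^{as}_{D,f₁}) ≥ det(qCov^{as}_{D,f₂}), where qCov^{as}_{D,f} = Cov_{D,g_f^{as}}. -/

import Mathlib

open ComplexOrder Matrix

/-- The diagonal density matrix `D = diag(λ₁,…,λₙ)`. -/
noncomputable def Dmat {n : ℕ} (lam : Fin n → ℝ) : Matrix (Fin n) (Fin n) ℂ :=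
  Matrix.diagonal fun k => (lam k : ℂ)

/-- `A₀ = A - Tr(D A)·I`. -/
noncomputable def cent {n : ℕ} (lam : Fin n → ℝ) (A : Matrix (Fin n) (Fin n) ℂ) :
    Matrix (Fin n) (Fin n) ℂ :=
  A - (Dmat lam * A).trace • (1 : Matrix (Fin n) (Fin n) ℂ)

/-- The `N×N` covariance matrix `[Cov_{D,g}]_{ij} = (A⁽ⁱ⁾₀, A⁽ʲ⁾₀)_{D,g}` where
`(A,B)_{D,g} = Σ_{k,l} A_{lk}·B_{kl}·g(λ_k,λ_l)`. -/
noncomputable def covM {n N : ℕ} (lam : Fin n → ℝ) (g : ℝ → ℝ → ℝ)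
    (A : Fin N → Matrix (Fin n) (Fin n) ℂ) : Matrix (Fin N) (Fin N) ℂ :=
  Matrix.of fun i j =>
    ∑ k, ∑ l, (g (lam k) (lam l) : ℂ) * cent lam (A i) l k * cent lam (A j) k l
/-- `f ∈ F_op`: `f : (0,∞) → (0,∞)` is operator monotone (via the continuous functional
calculus on Hermitian matrices, with the Loewner order expressed through `PosSemidef`),
satisfies `f(x) = x·f(1/x)` for `x > 0`, and `f(1) = 1`. -/
structure IsFop (f : ℝ → ℝ) : Prop where
  pos : ∀ x : ℝ, 0 < x → 0 < f x
  opMono : ∀ (m : ℕ) (X Y : Matrix (Fin m) (Fin m) ℂ), X.PosSemidef → Y.PosSemidef →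
    (Y - X).PosSemidef → (cfc f Y - cfc f X).PosSemidef
  funcEq : ∀ x : ℝ, 0 < x → f x = x * f x⁻¹
  normalized : f 1 = 1

/-- `f(0) = lim_{t→0⁺} f(t)`. -/
def IsFzero (f : ℝ → ℝ) (f0 : ℝ) : Prop :=
  Filter.Tendsto f (nhdsWithin 0 (Set.Ioi 0)) (nhds f0)

/-- `m_f(x,y) = y·f(x/y)`. -/
noncomputable def mfun (f : ℝ → ℝ) (x y : ℝ) : ℝ := y * f (x / y)

/-- `g_cl(x,y) = (x+y)/2`. -/
noncomputable def gcl (x y : ℝ) : ℝ := (x + y) / 2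

/-- `g_f^{as}(x,y) = f(0)·(x−y)²/(2·m_f(x,y))`. -/
noncomputable def gas (f : ℝ → ℝ) (f0 : ℝ) (x y : ℝ) : ℝ :=
  f0 * (x - y) ^ 2 / (2 * mfun f x y)

/-- `g_f^{s}(x,y) = f(0)·(x+y)²/(2·m_f(x,y))`. -/
noncomputable def gs (f : ℝ → ℝ) (f0 : ℝ) (x y : ℝ) : ℝ :=
  f0 * (x + y) ^ 2 / (2 * mfun f x y)


lemma det_re_mono {N : ℕ} {M₁ M₂ : Matrix (Fin N) (Fin N) ℂ}
    (h₂ : M₂.PosSemidef) (h : (M₁ - M₂).PosSemidef) :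
    M₂.det.re ≤ M₁.det.re := by
  have h₁ : M₁.PosSemidef := by simpa using h₂.add h
  by_cases hd : M₁.det = 0
  · obtain ⟨v, hv, hMv⟩ := (Matrix.exists_mulVec_eq_zero_iff).2 hd
    have hq1 : star v ⬝ᵥ M₁ *ᵥ v = 0 := by rw [hMv, dotProduct_zero]
    have hle : star v ⬝ᵥ M₂ *ᵥ v ≤ 0 := by
      have h' := h.dotProduct_mulVec_nonneg v
      rw [sub_mulVec, dotProduct_sub, hq1, zero_sub] at h'
      exact neg_nonneg.mp h'
    have hq2 : star v ⬝ᵥ M₂ *ᵥ v = 0 := le_antisymm hle (h₂.dotProduct_mulVec_nonneg v)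
    have hz : M₂ *ᵥ v = 0 := (h₂.dotProduct_mulVec_zero_iff v).1 hq2
    have hd2 : M₂.det = 0 := Matrix.exists_mulVec_eq_zero_iff.1 ⟨v, hv, hz⟩
    simp [hd, hd2]
  · have hPD : M₁.PosDef := by
      refine Matrix.PosDef.of_dotProduct_mulVec_pos h₁.1 fun x hx =>
        lt_of_le_of_ne (h₁.dotProduct_mulVec_nonneg x) fun hc => ?_
      have hz : M₁ *ᵥ x = 0 := (h₁.dotProduct_mulVec_zero_iff x).1 hc.symm
      exact hd (Matrix.exists_mulVec_eq_zero_iff.1 ⟨x, hx, hz⟩)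
    obtain ⟨S, hSps, hSS⟩ : ∃ S : Matrix (Fin N) (Fin N) ℂ, S.PosSemidef ∧ S * S = M₁ := by
      open scoped MatrixOrder in
      exact ⟨CFC.sqrt M₁, Matrix.nonneg_iff_posSemidef.mp (CFC.sqrt_nonneg M₁),
        CFC.sqrt_mul_sqrt_self M₁ (Matrix.nonneg_iff_posSemidef.mpr h₁)⟩
    have hSH : S.IsHermitian := hSps.1
    have hdetS : IsUnit S.det := by
      rcases isUnit_iff_ne_zero.mpr hd with _
      refine isUnit_iff_ne_zero.mpr fun hc => hd ?_
      rw [← hSS, det_mul, hc, zero_mul]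
    have hinv1 : S⁻¹ * S = 1 := nonsing_inv_mul S hdetS
    have hinv2 : S * S⁻¹ = 1 := mul_nonsing_inv S hdetS
    have hSinvH : S⁻¹.IsHermitian := hSH.inv
    obtain ⟨T, hTdef⟩ : ∃ T, T = S⁻¹ * M₂ * S⁻¹ := ⟨_, rfl⟩
    have hTps : T.PosSemidef := by
      have h' := h₂.mul_mul_conjTranspose_same S⁻¹
      rw [hSinvH.eq] at h'
      rwa [hTdef]
    have hone : S⁻¹ * M₁ * S⁻¹ = 1 := by
      rw [← hSS, ← mul_assoc, mul_assoc (S⁻¹ * S), hinv1, one_mul, hinv2]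
    have hsub : ((1 : Matrix (Fin N) (Fin N) ℂ) - T).PosSemidef := by
      have h' := h.mul_mul_conjTranspose_same S⁻¹
      rw [hSinvH.eq] at h'
      have : S⁻¹ * (M₁ - M₂) * S⁻¹ = 1 - T := by
        rw [Matrix.mul_sub, Matrix.sub_mul, hone, hTdef]
      rwa [this] at h'
    have hTH : T.IsHermitian := hTps.1
    have hev0 : ∀ i, 0 ≤ hTH.eigenvalues i := hTps.eigenvalues_nonneg
    have hev1 : ∀ i, hTH.eigenvalues i ≤ 1 := by
      intro i
      set v : Fin N → ℂ := ⇑(hTH.eigenvectorBasis i) with hvdef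
      have hv0 : v ≠ 0 := by
        intro hc
        have h1 := hTH.eigenvectorBasis.orthonormal.1 i
        have h2 : (hTH.eigenvectorBasis i : EuclideanSpace ℂ (Fin N)) = 0 := WithLp.ofLp_injective 2 hc
        rw [h2] at h1
        simp at h1
      have hvv : (0:ℂ) < star v ⬝ᵥ v := Matrix.dotProduct_star_self_pos_iff.mpr hv0
      have hTv : T *ᵥ v = (hTH.eigenvalues i : ℝ) • v := hTH.mulVec_eigenvectorBasis i
      have hq := hsub.dotProduct_mulVec_nonneg v
      rw [sub_mulVec, dotProduct_sub, one_mulVec, hTv, dotProduct_smul] at hq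
      have hq' : 0 ≤ ((1 : ℂ) - (hTH.eigenvalues i : ℂ)) * (star v ⬝ᵥ v) := by
        rw [Complex.real_smul] at hq
        rw [sub_mul, one_mul]
        exact hq
      by_contra hgt
      push_neg at hgt
      have hneg : ((1 : ℂ) - (hTH.eigenvalues i : ℂ)) * (star v ⬝ᵥ v) < 0 := by
        have h1 : ((1 : ℂ) - (hTH.eigenvalues i : ℂ)) < 0 := by
          rw [sub_neg]
          exact_mod_cast (by exact_mod_cast hgt : (1:ℂ) < (hTH.eigenvalues i : ℂ))
        exact mul_neg_of_neg_of_pos h1 hvv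
      exact absurd (lt_of_le_of_lt hq' hneg) (lt_irrefl 0)
    have hdetT : T.det = ((∏ i, hTH.eigenvalues i : ℝ) : ℂ) := by
      rw [hTH.det_eq_prod_eigenvalues]; push_cast; rfl
    have hprod0 : 0 ≤ ∏ i, hTH.eigenvalues i :=
      Finset.prod_nonneg fun i _ => hev0 i
    have hprod1 : ∏ i, hTH.eigenvalues i ≤ 1 :=
      Finset.prod_le_one (fun i _ => hev0 i) fun i _ => hev1 i
    have hM2 : M₂ = S * T * S := by
      rw [hTdef, ← mul_assoc, ← mul_assoc, hinv2, one_mul, mul_assoc, hinv1, mul_one]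
    have hdet2 : M₂.det = M₁.det * T.det := by
      rw [hM2, det_mul, det_mul, ← hSS, det_mul]; ring
    clear hTdef
    have hdpos : (0:ℂ) < M₁.det := hPD.det_pos
    have him : M₁.det.im = 0 := by
      rw [Complex.lt_def] at hdpos; exact hdpos.2.symm
    have hre : 0 < M₁.det.re := by
      rw [Complex.lt_def] at hdpos; simpa using hdpos.1
    rw [hdet2, hdetT]
    simp only [Complex.mul_re, Complex.ofReal_re, Complex.ofReal_im, him, mul_zero, zero_mul,
      sub_zero]
    calc M₁.det.re * ∏ i, hTH.eigenvalues i ≤ M₁.det.re * 1 :=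
          mul_le_mul_of_nonneg_left hprod1 hre.le
      _ = M₁.det.re := mul_one _

lemma cent_isHermitian {n : ℕ} (lam : Fin n → ℝ) {A : Matrix (Fin n) (Fin n) ℂ}
    (hA : A.IsHermitian) : (cent lam A).IsHermitian := by
  have htr : star (Dmat lam * A).trace = (Dmat lam * A).trace := by
    have h1 : (Dmat lam * A).trace = ∑ k, (lam k : ℂ) * A k k := by
      simp [Matrix.trace, Matrix.diag, Dmat, Matrix.diagonal_mul]
    rw [h1, star_sum]
    refine Finset.sum_congr rfl fun k _ => ?_
    have hAkk : star (A k k) = A k k := by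
      conv_rhs => rw [← hA.eq]
      rw [conjTranspose_apply]
    rw [star_mul', hAkk, Complex.star_def, Complex.conj_ofReal]
  show (cent lam A)ᴴ = cent lam A
  rw [cent, conjTranspose_sub, conjTranspose_smul, conjTranspose_one, htr, hA.eq]

private lemma sum4_comm {a b c d : ℕ} {M : Type*} [AddCommMonoid M]
    (f : Fin a → Fin b → Fin c → Fin d → M) :
    ∑ i, ∑ j, ∑ k, ∑ l, f i j k l = ∑ k, ∑ l, ∑ i, ∑ j, f i j k l := by
  calc ∑ i, ∑ j, ∑ k, ∑ l, f i j k l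
      = ∑ i, ∑ k, ∑ l, ∑ j, f i j k l := by
        refine Finset.sum_congr rfl fun i _ => ?_
        rw [Finset.sum_comm]
        exact Finset.sum_congr rfl fun k _ => Finset.sum_comm
    _ = ∑ k, ∑ i, ∑ l, ∑ j, f i j k l := Finset.sum_comm
    _ = ∑ k, ∑ l, ∑ i, ∑ j, f i j k l :=
        Finset.sum_congr rfl fun k _ => Finset.sum_comm

lemma quad_posSemidef {n N : ℕ} (g' : Fin n → Fin n → ℝ) (hg : ∀ k l, 0 ≤ g' k l)
    (B : Fin N → Matrix (Fin n) (Fin n) ℂ) (hB : ∀ a, (B a).IsHermitian) :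
    (Matrix.of fun i j =>
      ∑ k, ∑ l, (g' k l : ℂ) * B i l k * B j k l : Matrix (Fin N) (Fin N) ℂ).PosSemidef := by
  have hBs : ∀ a k l, star (B a k l) = B a l k := by
    intro a k l
    conv_rhs => rw [← (hB a).eq]
    rw [conjTranspose_apply]
  refine Matrix.PosSemidef.of_dotProduct_mulVec_nonneg ?_ ?_
  · show _ᴴ = _
    ext i j
    rw [conjTranspose_apply, of_apply, of_apply, star_sum]
    refine Finset.sum_congr rfl fun k _ => ?_
    rw [star_sum]
    refine Finset.sum_congr rfl fun l _ => ?_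
    rw [star_mul', star_mul', hBs, hBs, Complex.star_def, Complex.conj_ofReal]
    ring
  · intro x
    have key : star x ⬝ᵥ (Matrix.of fun i j =>
          ∑ k, ∑ l, (g' k l : ℂ) * B i l k * B j k l : Matrix (Fin N) (Fin N) ℂ) *ᵥ x
        = ∑ k, ∑ l, (g' k l : ℂ) *
            ((∑ a, star (x a) * B a l k) * (∑ b, x b * B b k l)) := by
      have L1 : star x ⬝ᵥ (Matrix.of fun i j =>
            ∑ k, ∑ l, (g' k l : ℂ) * B i l k * B j k l : Matrix (Fin N) (Fin N) ℂ) *ᵥ x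
          = ∑ i, ∑ j, ∑ k, ∑ l,
              star (x i) * ((g' k l : ℂ) * B i l k * B j k l * x j) := by
        simp only [dotProduct, mulVec, of_apply, Pi.star_apply, Finset.mul_sum,
          Finset.sum_mul]
      rw [L1, sum4_comm]
      refine Finset.sum_congr rfl fun k _ => Finset.sum_congr rfl fun l _ => ?_
      simp only [Finset.mul_sum, Finset.sum_mul]
      rw [Finset.sum_comm]
      refine Finset.sum_congr rfl fun i _ => ?_
      refine Finset.sum_congr rfl fun j _ => ?_
      ring
    rw [key]
    refine Finset.sum_nonneg fun k _ => Finset.sum_nonneg fun l _ => ?_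
    have h1 : (0:ℂ) ≤ (g' k l : ℂ) := by
      rw [Complex.zero_le_real]
      exact hg k l
    have hsc : (∑ a, star (x a) * B a l k) = star (∑ b, x b * B b k l) := by
      rw [star_sum]
      refine Finset.sum_congr rfl fun a _ => ?_
      rw [star_mul', hBs]
    rw [hsc]
    exact mul_nonneg h1 (star_mul_self_nonneg _)

lemma covM_posSemidef {n N : ℕ} (lam : Fin n → ℝ) (g : ℝ → ℝ → ℝ)
    (hg : ∀ k l, 0 ≤ g (lam k) (lam l))
    (A : Fin N → Matrix (Fin n) (Fin n) ℂ) (hA : ∀ a, (A a).IsHermitian) :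
    (covM lam g A).PosSemidef :=
  quad_posSemidef (fun k l => g (lam k) (lam l)) hg (fun a => cent lam (A a))
    (fun a => cent_isHermitian lam (hA a))

lemma covM_sub {n N : ℕ} (lam : Fin n → ℝ) (g₁ g₂ : ℝ → ℝ → ℝ)
    (A : Fin N → Matrix (Fin n) (Fin n) ℂ) :
    covM lam g₁ A - covM lam g₂ A = covM lam (fun x y => g₁ x y - g₂ x y) A := by
  ext i j
  simp only [covM, Matrix.sub_apply, of_apply, ← Finset.sum_sub_distrib]
  refine Finset.sum_congr rfl fun k _ => Finset.sum_congr rfl fun l _ => ?_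
  push_cast
  ring

lemma fz_nonneg {f : ℝ → ℝ} {f0 : ℝ} (hf : IsFop f) (h0 : IsFzero f f0) : 0 ≤ f0 :=
  ge_of_tendsto h0 (Filter.eventually_of_mem self_mem_nhdsWithin fun t ht => (hf.pos t ht).le)

lemma gas_nonneg {f : ℝ → ℝ} {f0 : ℝ} (hf : IsFop f) (hf0 : 0 ≤ f0) {x y : ℝ}
    (hx : 0 < x) (hy : 0 < y) : 0 ≤ gas f f0 x y := by
  unfold gas mfun
  have h1 : 0 < f (x / y) := hf.pos _ (div_pos hx hy)
  apply div_nonneg (mul_nonneg hf0 (sq_nonneg _))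
  positivity

lemma gas_mono {f₁ f₂ : ℝ → ℝ} {f01 f02 : ℝ} (hf₁ : IsFop f₁) (hf₂ : IsFop f₂)
    (hff : ∀ t : ℝ, 0 < t → f02 / f₂ t ≤ f01 / f₁ t) {x y : ℝ}
    (hx : 0 < x) (hy : 0 < y) : gas f₂ f02 x y ≤ gas f₁ f01 x y := by
  have ht : 0 < x / y := div_pos hx hy
  have e : ∀ f : ℝ → ℝ, ∀ f0 : ℝ, 0 < f (x / y) →
      gas f f0 x y = (x - y) ^ 2 / (2 * y) * (f0 / f (x / y)) := by
    intro f f0 hfp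
    unfold gas mfun
    field_simp
  rw [e f₁ f01 (hf₁.pos _ ht), e f₂ f02 (hf₂.pos _ ht)]
  exact mul_le_mul_of_nonneg_left (hff _ ht) (by positivity)

/-- If `f₁(0)/f₁(t) ≥ f₂(0)/f₂(t)` for all `t > 0`, then `det(qCov^{as}_{D,f₁}) ≥ det(qCov^{as}_{D,f₂})`. -/
theorem det_qCov_as_ge_det_qCov_as (n N : ℕ) (lam : Fin n → ℝ)
    (hlam : ∀ k, 0 < lam k) (hsum : ∑ k, lam k = 1)
    (f₁ f₂ : ℝ → ℝ) (hf₁ : IsFop f₁) (hf₂ : IsFop f₂)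
    (f01 f02 : ℝ) (hf01 : IsFzero f₁ f01) (hf02 : IsFzero f₂ f02)
    (hff : ∀ t : ℝ, 0 < t → f02 / f₂ t ≤ f01 / f₁ t)
    (A : Fin N → Matrix (Fin n) (Fin n) ℂ) (hA : ∀ a, (A a).IsHermitian) :
    (covM lam (gas f₂ f02) A).det.re ≤ (covM lam (gas f₁ f01) A).det.re := by
  have h2nn : ∀ k l, 0 ≤ gas f₂ f02 (lam k) (lam l) := fun k l =>
    gas_nonneg hf₂ (fz_nonneg hf₂ hf02) (hlam k) (hlam l)
  have hdnn : ∀ k l, 0 ≤ (fun x y => gas f₁ f01 x y - gas f₂ f02 x y) (lam k) (lam l) :=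
    fun k l => sub_nonneg.2 (gas_mono hf₁ hf₂ hff (hlam k) (hlam l))
  exact det_re_mono (covM_posSemidef lam _ h2nn A hA)
    (by rw [covM_sub]; exact covM_posSemidef lam _ hdnn A hA)
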